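/- Let s ∈ ℝ and let Φ : ℝ → ℝ be twice continuously differentiable with Φ''(η) + s·Φ'(η) + Φ(η)(1 − Φ(η)) = 0 for all η ∈ ℝ, Φ(η) ≥ 0 for all η, Φ(η) → 1 as η → −∞ and Φ(η) → 0 as η → +∞. Then |s| ≥ 2. That is, no nonnegative FKPP travelling front exists with speed below the minimal speed 2; for |s| < 2 the linearization at the origin has complex eigenvalues forcing any connecting orbit to attain negative values. -/

import Mathlib

open Filter Topology

/-- If `F' ≤ c` on `[B, ∞)` then `F x ≤ F B + c (x - B)` there. -/
private lemma FKPP_decay {F F' : ℝ → ℝ} {B c : ℝ}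
    (hF : ∀ x, HasDerivAt F (F' x) x) (hle : ∀ x ∈ Set.Ici B, F' x ≤ c) :
    ∀ x ∈ Set.Ici B, F x ≤ F B + c * (x - B) := by
  intro x hx
  have hG : ∀ y, HasDerivAt (fun z => F z - c * z) (F' y - c) y := by
    intro y
    have h := (hF y).sub ((hasDerivAt_id y).const_mul c)
    rw [mul_one] at h; exact h
  have hd : Differentiable ℝ (fun z => F z - c * z) := fun y => (hG y).differentiableAt
  have hanti : AntitoneOn (fun z => F z - c * z) (Set.Ici B) :=
    antitoneOn_of_deriv_nonpos (convex_Ici B) hd.continuous.continuousOn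
      hd.differentiableOn (by
        intro y hy
        rw [interior_Ici] at hy
        rw [(hG y).deriv]
        have := hle y (Set.Ioi_subset_Ici_self hy)
        linarith)
  have h1 := hanti Set.self_mem_Ici hx hx
  have h2 : c * (x - B) = c * x - c * B := by ring
  simp only at h1
  linarith

private lemma FKPP_pt (B a b : ℝ) (hb : b < 0) (ha : 0 ≤ a) :
    ∃ x, B ≤ x ∧ b * (x - B) = -(a + 1) := by
  refine ⟨B + (a + 1) / (-b), ?_, ?_⟩
  · have h : 0 < (a + 1) / (-b) := div_pos (by linarith) (by linarith)
    linarith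
  · have hb' : (-b) ≠ 0 := by intro h; rw [neg_eq_zero] at h; linarith
    field_simp
    linear_combination (-a - 1) * mul_inv_cancel₀ hb.ne

theorem FKPP_front_speed_at_least_two
    (s : ℝ) (Φ : ℝ → ℝ) (hΦ : ContDiff ℝ 2 Φ)
    (hODE : ∀ η : ℝ, deriv (deriv Φ) η + s * deriv Φ η + Φ η * (1 - Φ η) = 0)
    (hpos : ∀ η : ℝ, 0 ≤ Φ η)
    (hlim1 : Tendsto Φ atBot (𝓝 1)) (hlim0 : Tendsto Φ atTop (𝓝 0)) :
    2 ≤ |s| := by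
  by_contra hcon
  push_neg at hcon
  have habs : |s| < 2 := hcon
  have hs4 : s ^ 2 < 4 := by nlinarith [abs_nonneg s, sq_abs s]
  -- basic differentiability facts
  have hΦ11 : ContDiff ℝ (1 + 1 : ℕ) Φ := by exact_mod_cast hΦ
  have hdΦ : Differentiable ℝ Φ := hΦ.differentiable (by norm_num)
  have hΦ' : ContDiff ℝ 1 (deriv Φ) := (contDiff_succ_iff_deriv.mp hΦ11).2.2
  have hdΦ' : Differentiable ℝ (deriv Φ) := hΦ'.differentiable one_ne_zero
  have hd1 : ∀ η, HasDerivAt Φ (deriv Φ η) η := fun η => (hdΦ η).hasDerivAt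
  have hd2 : ∀ η, HasDerivAt (deriv Φ) (deriv (deriv Φ) η) η := fun η => (hdΦ' η).hasDerivAt
  -- the substitution w = exp(sη/2) Φ
  set w : ℝ → ℝ := fun η => Real.exp (s * η / 2) * Φ η with hwdef
  set w' : ℝ → ℝ := fun η => Real.exp (s * η / 2) * (s / 2 * Φ η + deriv Φ η) with hw'def
  set E : ℝ → ℝ := fun η => Real.exp (s * η / 2) * ((s ^ 2 / 4 - (1 - Φ η)) * Φ η) with hEdef
  have hexp : ∀ η : ℝ, HasDerivAt (fun x => Real.exp (s * x / 2))
      (Real.exp (s * η / 2) * (s / 2)) η := by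
    intro η
    have h0 : HasDerivAt (fun x : ℝ => s * x / 2) (s / 2) η := by
      simpa using (((hasDerivAt_id η).const_mul s).div_const 2)
    simpa using h0.exp
  have hw' : ∀ η, HasDerivAt w (w' η) η := by
    intro η
    have := (hexp η).mul (hd1 η)
    refine this.congr_deriv ?_
    simp only [hw'def]
    ring
  have hw'' : ∀ η, HasDerivAt w' (E η) η := by
    intro η
    have hin : HasDerivAt (fun x => s / 2 * Φ x + deriv Φ x)
        (s / 2 * deriv Φ η + deriv (deriv Φ) η) η := ((hd1 η).const_mul (s / 2)).add (hd2 η)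
    have := (hexp η).mul hin
    refine this.congr_deriv ?_
    have hO := hODE η
    simp only [hEdef]
    linear_combination (Real.exp (s * η / 2)) * hO
  -- choose A with Φ < δ on [A, ∞)
  set δ : ℝ := (1 - s ^ 2 / 4) / 2 with hδdef
  have hδ : 0 < δ := by simp only [hδdef]; linarith
  obtain ⟨A, hA⟩ : ∃ A : ℝ, ∀ η ≥ A, Φ η < δ :=
    eventually_atTop.mp (hlim0.eventually (gt_mem_nhds hδ))
  have hw_nonneg : ∀ η, 0 ≤ w η := fun η => mul_nonneg (Real.exp_pos _).le (hpos η)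
  have hE_le : ∀ η, A ≤ η → E η ≤ -(δ * w η) := by
    intro η hη
    have h1 : (s ^ 2 / 4 - (1 - Φ η)) * Φ η ≤ -δ * Φ η := by
      apply mul_le_mul_of_nonneg_right _ (hpos η)
      have := hA η hη
      simp only [hδdef] at *
      linarith
    have h2 := mul_le_mul_of_nonneg_left h1 (Real.exp_pos (s * η / 2)).le
    calc E η ≤ Real.exp (s * η / 2) * (-δ * Φ η) := h2
      _ = -(δ * w η) := by simp only [hwdef]; ring
  have hE_nonpos : ∀ η, A ≤ η → E η ≤ 0 := by
    intro η hη
    have := hE_le η hη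
    have h0 : 0 ≤ δ * w η := mul_nonneg hδ.le (hw_nonneg η)
    linarith
  -- w' ≥ 0 on [A, ∞)
  have hw'_nonneg : ∀ B, A ≤ B → 0 ≤ w' B := by
    intro B hB
    by_contra hneg
    push_neg at hneg
    have hmono : ∀ x ∈ Set.Ici B, w' x ≤ w' B :=
      fun x hx => by
        have := FKPP_decay hw'' (fun y hy => hE_nonpos y (le_trans hB hy)) x hx
        simpa using this
    have hlin := FKPP_decay hw' hmono
    obtain ⟨x, hxB, hval⟩ := FKPP_pt B (w B) (w' B) hneg (hw_nonneg B)
    have := hlin x hxB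
    rw [hval] at this
    have := hw_nonneg x
    linarith
  -- w ≡ 0 on [A, ∞)
  have hΦ0 : ∀ η, A ≤ η → Φ η = 0 := by
    intro B hB
    have hwB : w B = 0 := by
      by_contra hne
      have hwBpos : 0 < w B := lt_of_le_of_ne (hw_nonneg B) (Ne.symm hne)
      -- w is nondecreasing on [B, ∞)
      have hmono : ∀ x ∈ Set.Ici B, w B ≤ w x := by
        intro x hx
        have hneg : ∀ y, HasDerivAt (fun z => -w z) (-w' y) y := fun y => (hw' y).neg
        have := FKPP_decay (c := 0) hneg
          (fun y hy => by simpa using neg_nonpos.mpr (hw'_nonneg y (le_trans hB hy))) x hx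
        linarith
      have hle2 : ∀ y ∈ Set.Ici B, E y ≤ -(δ * w B) := by
        intro y hy
        have h1 := hE_le y (le_trans hB hy)
        have h2 : δ * w B ≤ δ * w y := mul_le_mul_of_nonneg_left (hmono y hy) hδ.le
        linarith
      have hdec := FKPP_decay hw'' hle2
      have hden : 0 < δ * w B := mul_pos hδ hwBpos
      obtain ⟨x, hxB, hval⟩ := FKPP_pt B (w' B) (-(δ * w B)) (by linarith) (hw'_nonneg B hB)
      have := hdec x hxB
      rw [hval] at this
      have := hw'_nonneg x (le_trans hB hxB)
      linarith
    have hexpne : Real.exp (s * B / 2) ≠ 0 := (Real.exp_pos _).ne'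
    have : Real.exp (s * B / 2) * Φ B = 0 := hwB
    exact (mul_eq_zero.mp this).resolve_left hexpne
  -- backward uniqueness: Φ ≡ 0 everywhere
  have hΦall : ∀ a : ℝ, Φ a = 0 := by
    intro a
    rcases le_or_gt (A + 1) a with hab | hab
    · exact hΦ0 a (by linarith)
    · set b : ℝ := A + 1 with hbdef
      have hab' : a ≤ b := hab.le
      -- bound on the trajectory
      have hFcont : ContinuousOn (fun t => (Φ t, deriv Φ t)) (Set.Icc a b) :=
        (hdΦ.continuous.prodMk hΦ'.continuous).continuousOn
      obtain ⟨C, hC⟩ := isCompact_Icc.exists_bound_of_continuousOn hFcont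
      set R : ℝ := max C 0 with hRdef
      have hR0 : (0 : ℝ) ≤ R := le_max_right _ _
      set K : NNReal := Real.toNNReal (|s| + 2 + 2 * R) with hKdef
      have hK : (K : ℝ) = |s| + 2 + 2 * R := Real.coe_toNNReal _ (by positivity)
      set v : ℝ → ℝ × ℝ → ℝ × ℝ := fun _ p => (p.2, -s * p.2 - p.1 * (1 - p.1)) with hvdef
      have hlip : ∀ t : ℝ, LipschitzOnWith K (v t) (Metric.closedBall 0 R) := by
        intro t
        rw [lipschitzOnWith_iff_dist_le_mul]
        intro p hp q hq
        rw [Metric.mem_closedBall] at hp hq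
        have hfst : ∀ (u z : ℝ × ℝ), |u.1 - z.1| ≤ dist u z := by
          intro u z
          have h := le_max_left (dist u.1 z.1) (dist u.2 z.2)
          rw [← Prod.dist_eq] at h
          simpa [Real.dist_eq] using h
        have hsnd : ∀ (u z : ℝ × ℝ), |u.2 - z.2| ≤ dist u z := by
          intro u z
          have h := le_max_right (dist u.1 z.1) (dist u.2 z.2)
          rw [← Prod.dist_eq] at h
          simpa [Real.dist_eq] using h
        have hp1 : |p.1| ≤ R := by
          have h := (hfst p 0).trans hp
          simpa using h
        have hq1 : |q.1| ≤ R := by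
          have h := (hfst q 0).trans hq
          simpa using h
        have hd1' : |p.1 - q.1| ≤ dist p q := hfst p q
        have hd2' : |p.2 - q.2| ≤ dist p q := hsnd p q
        have hdnn : (0 : ℝ) ≤ dist p q := dist_nonneg
        rw [Prod.dist_eq, hK]
        apply max_le
        · have h := hsnd p q
          rw [Real.dist_eq]
          nlinarith [abs_nonneg s]
        · rw [Real.dist_eq]
          have key : (-s * p.2 - p.1 * (1 - p.1)) - (-s * q.2 - q.1 * (1 - q.1)) =
              (-s) * (p.2 - q.2) + (-(p.1 - q.1)) + (p.1 - q.1) * (p.1 + q.1) := by ring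
          rw [key]
          have h3 := abs_add_three ((-s) * (p.2 - q.2)) (-(p.1 - q.1))
            ((p.1 - q.1) * (p.1 + q.1))
          rw [abs_mul, abs_mul, abs_neg, abs_neg] at h3
          have hsum : |p.1 + q.1| ≤ 2 * R := by
            calc |p.1 + q.1| ≤ |p.1| + |q.1| := abs_add_le _ _
              _ ≤ 2 * R := by linarith
          have t1 : |s| * |p.2 - q.2| ≤ |s| * dist p q :=
            mul_le_mul_of_nonneg_left hd2' (abs_nonneg s)
          have t2 : |p.1 - q.1| * |p.1 + q.1| ≤ dist p q * (2 * R) :=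
            mul_le_mul hd1' hsum (abs_nonneg _) hdnn
          nlinarith [abs_nonneg (p.1 - q.1)]
      -- both (Φ, Φ') and 0 solve the ODE; they agree at b
      have hf' : ∀ t ∈ Set.Ioc a b,
          HasDerivWithinAt (fun t => (Φ t, deriv Φ t)) (v t (Φ t, deriv Φ t)) (Set.Iic t) t := by
        intro t _
        have h2 : deriv (deriv Φ) t = -s * deriv Φ t - Φ t * (1 - Φ t) := by
          have := hODE t; linarith
        have := ((hd1 t).prodMk (hd2 t)).hasDerivWithinAt (s := Set.Iic t)
        rw [h2] at this
        exact this
      have hfs : ∀ t ∈ Set.Ioc a b, (Φ t, deriv Φ t) ∈ Metric.closedBall (0 : ℝ × ℝ) R := by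
        intro t ht
        rw [Metric.mem_closedBall, dist_zero_right]
        exact (hC t (Set.Ioc_subset_Icc_self ht)).trans (le_max_left _ _)
      have hg' : ∀ t ∈ Set.Ioc a b,
          HasDerivWithinAt (fun _ : ℝ => ((0 : ℝ), (0 : ℝ))) (v t ((0 : ℝ), (0 : ℝ)))
            (Set.Iic t) t := by
        intro t _
        have : v t ((0 : ℝ), (0 : ℝ)) = ((0 : ℝ), (0 : ℝ)) := by
          simp [hvdef]
        rw [this]
        exact (hasDerivAt_const t _).hasDerivWithinAt
      have hgs : ∀ t ∈ Set.Ioc a b, ((0 : ℝ), (0 : ℝ)) ∈ Metric.closedBall (0 : ℝ × ℝ) R := by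
        intro t _
        exact Metric.mem_closedBall_self hR0
      have hΦ'b : deriv Φ b = 0 := by
        have hev : Φ =ᶠ[𝓝 b] fun _ => (0 : ℝ) := by
          filter_upwards [Ioi_mem_nhds (show A < b by simp only [hbdef]; linarith)] with y hy
          exact hΦ0 y (le_of_lt hy)
        rw [hev.deriv_eq]
        simp
      have hfb : (fun t => (Φ t, deriv Φ t)) b = (fun _ : ℝ => ((0 : ℝ), (0 : ℝ))) b := by
        simp only
        rw [hΦ0 b (by simp only [hbdef]; linarith), hΦ'b]
      have huniq := ODE_solution_unique_of_mem_Icc_left (fun t _ => hlip t) hFcont hf' hfs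
        continuousOn_const hg' hgs hfb
      have := huniq ⟨le_rfl, hab'⟩
      exact (Prod.mk.injEq _ _ _ _).mp this |>.1
  have hzero : Tendsto Φ atBot (𝓝 0) := by
    have hΦeq : Φ = fun _ => (0 : ℝ) := funext hΦall
    rw [hΦeq]
    exact tendsto_const_nhds
  exact one_ne_zero (tendsto_nhds_unique hlim1 hzero)
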